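/- Let f ∈ K[X₁,…,Xₘ] be an irreducible polynomial and φ a nondegenerate quadratic form over K. If there exists a ∈ K* such that a·f lies in T_{K(X₁,…,Xₘ)}(φ), the group generated by values of φ over the rational function field, then φ becomes isotropic over K(f), the fraction field of K[X₁,…,Xₘ]/(f). -/

import Mathlib

set_option synthInstance.maxHeartbeats 1000000
set_option maxHeartbeats 1000000

open scoped TensorProduct

noncomputable section

/-- Nonzero values represented by a quadratic form, as a subset of the field. -/
def Dv {K V : Type*} [Field K] [AddCommGroup V] [Module K V]
    (Q : QuadraticForm K V) : Set K :=
  {a | a ≠ 0 ∧ ∃ v, Q v = a}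

/-- Values represented by a quadratic form, as a set of units. -/
def Dunits {K V : Type*} [Field K] [AddCommGroup V] [Module K V]
    (Q : QuadraticForm K V) : Set Kˣ :=
  {u | ∃ v, Q v = (u : K)}

/-- `T_K(Q)`: the subgroup of `Kˣ` generated by the values represented by `Q`. -/
def Tgrp {K V : Type*} [Field K] [AddCommGroup V] [Module K V]
    (Q : QuadraticForm K V) : Subgroup Kˣ :=
  Subgroup.closure (Dunits Q)

/-- `N_K(Q)`: the subgroup of `Kˣ` generated by products of two represented values. -/
def Ngrp {K V : Type*} [Field K] [AddCommGroup V] [Module K V]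
    (Q : QuadraticForm K V) : Subgroup Kˣ :=
  Subgroup.closure {u : Kˣ | ∃ a b : Kˣ, a ∈ Dunits Q ∧ b ∈ Dunits Q ∧ u = a * b}

/-- Products of exactly `m` values represented by `Q`. -/
def Dpow {K V : Type*} [Field K] [AddCommGroup V] [Module K V]
    (Q : QuadraticForm K V) (m : ℕ) : Set K :=
  {x | ∃ c : Fin m → K, (∀ i, c i ∈ Dv Q) ∧ x = ∏ i, c i}

/-- Isotropy of (the scalar extension of) `Q` over a commutative `K`-algebra `F`. -/
def IsotropicOver {K V : Type*} [Field K] [Invertible (2 : K)] [AddCommGroup V] [Module K V]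
    (Q : QuadraticForm K V) (F : Type*) [CommRing F] [Algebra K F] : Prop :=
  ∃ w : F ⊗[K] V, w ≠ 0 ∧ Q.baseChange F w = 0

/-- The polynomial obtained by evaluating `Q` at the generic point in the basis `b`. -/
def genPoly {K V ι : Type*} [Field K] [Invertible (2 : K)] [AddCommGroup V] [Module K V]
    [Fintype ι] (b : Module.Basis ι K V) (Q : QuadraticForm K V) : MvPolynomial ι K :=
  Q.baseChange (MvPolynomial ι K) (∑ i, MvPolynomial.X i ⊗ₜ[K] b i)

/-- The affine coordinate ring of the quadric `Q = 0` (in the coordinates given by `b`). -/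
abbrev CoordRing {K V ι : Type*} [Field K] [Invertible (2 : K)] [AddCommGroup V] [Module K V]
    [Fintype ι] (b : Module.Basis ι K V) (Q : QuadraticForm K V) : Type _ :=
  MvPolynomial ι K ⧸ Ideal.span {genPoly b Q}

/-- The function field `K(Q)` of the quadric `Q = 0`. -/
abbrev FunctionFieldQF {K V ι : Type*} [Field K] [Invertible (2 : K)] [AddCommGroup V]
    [Module K V] [Fintype ι] (b : Module.Basis ι K V) (Q : QuadraticForm K V) : Type _ :=
  FractionRing (CoordRing b Q)

namespace Stmt5Aux

/-- abbreviation for the polynomial ring -/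
abbrev Rm (K : Type*) [Field K] (m : ℕ) : Type _ := MvPolynomial (Fin m) K

/-- abbreviation for its fraction field -/
abbrev Fm (K : Type*) [Field K] (m : ℕ) : Type _ := FractionRing (MvPolynomial (Fin m) K)

section Natural

variable {K V : Type*} [Field K] [Invertible (2 : K)] [AddCommGroup V] [Module K V]

/-- polar naturality -/
lemma polar_natural {A B : Type*} [CommRing A] [Algebra K A] [CommRing B] [Algebra K B]
    (ψ : A →ₐ[K] B) (Q : QuadraticForm K V) (x y : A ⊗[K] V) :
    QuadraticMap.polar (Q.baseChange B) (LinearMap.rTensor V ψ.toLinearMap x)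
      (LinearMap.rTensor V ψ.toLinearMap y)
      = ψ (QuadraticMap.polar (Q.baseChange A) x y) := by
  letI : Invertible (2 : A) := (Invertible.map (algebraMap K A) 2).copy 2 (map_ofNat _ _).symm
  letI : Invertible (2 : B) := (Invertible.map (algebraMap K B) 2).copy 2 (map_ofNat _ _).symm
  have hA : ∀ x y : A ⊗[K] V, QuadraticMap.polar (Q.baseChange A) x y
      = (QuadraticMap.polarBilin (Q.baseChange A)) x y := fun _ _ => rfl
  have hB : ∀ x y : B ⊗[K] V, QuadraticMap.polar (Q.baseChange B) x y
      = (QuadraticMap.polarBilin (Q.baseChange B)) x y := fun _ _ => rfl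
  rw [hA, hB, QuadraticForm.polarBilin_baseChange, QuadraticForm.polarBilin_baseChange]
  induction x using TensorProduct.induction_on with
  | zero => simp
  | add x₁ x₂ h1 h2 => simp only [map_add, LinearMap.add_apply, h1, h2]
  | tmul a v =>
    induction y using TensorProduct.induction_on with
    | zero => simp
    | add y₁ y₂ h1 h2 => simp only [map_add, h1, h2]
    | tmul a' v' =>
      simp only [LinearMap.rTensor_tmul, AlgHom.toLinearMap_apply,
        LinearMap.BilinForm.baseChange_tmul]
      rw [Algebra.smul_def, Algebra.smul_def, map_mul, AlgHom.commutes, map_mul]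

/-- naturality of baseChange along algebra maps -/
lemma baseChange_natural {A B : Type*} [CommRing A] [Algebra K A] [CommRing B] [Algebra K B]
    (ψ : A →ₐ[K] B) (Q : QuadraticForm K V) (x : A ⊗[K] V) :
    Q.baseChange B (LinearMap.rTensor V ψ.toLinearMap x) = ψ (Q.baseChange A x) := by
  induction x using TensorProduct.induction_on with
  | zero => simp [map_zero, QuadraticMap.map_zero]
  | tmul a v =>
    rw [LinearMap.rTensor_tmul]
    simp only [AlgHom.toLinearMap_apply, QuadraticForm.baseChange_tmul]
    rw [Algebra.smul_def, Algebra.smul_def, map_mul, AlgHom.commutes, map_mul]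
  | add x₁ x₂ h1 h2 =>
    rw [map_add, QuadraticMap.map_add (⇑(Q.baseChange B)), QuadraticMap.map_add (⇑(Q.baseChange A)),
      map_add, map_add, h1, h2]
    congr 1
    exact polar_natural ψ Q x₁ x₂

end Natural

section Phi

variable {K : Type*} [Field K] [Invertible (2 : K)] {n : ℕ}

/-- evaluation of the base-changed form at explicit coordinates -/
def Phi (φ : QuadraticForm K (Fin n → K)) (A : Type*) [CommRing A] [Algebra K A]
    (c : Fin n → A) : A :=
  φ.baseChange A (∑ j, c j ⊗ₜ[K] Pi.basisFun K (Fin n) j)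

variable (φ : QuadraticForm K (Fin n → K))

lemma Phi_natural {A B : Type*} [CommRing A] [Algebra K A] [CommRing B] [Algebra K B]
    (ψ : A →ₐ[K] B) (c : Fin n → A) :
    Phi φ B (fun j => ψ (c j)) = ψ (Phi φ A c) := by
  unfold Phi
  rw [← baseChange_natural ψ φ]
  congr 1
  rw [map_sum]
  exact Finset.sum_congr rfl fun j _ => by rw [LinearMap.rTensor_tmul]; rfl

lemma Phi_smul {A : Type*} [CommRing A] [Algebra K A] (g : A) (c : Fin n → A) :
    Phi φ A (g • c) = g ^ 2 * Phi φ A c := by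
  unfold Phi
  have : ∑ j, (g • c) j ⊗ₜ[K] Pi.basisFun K (Fin n) j
      = g • ∑ j, c j ⊗ₜ[K] Pi.basisFun K (Fin n) j := by
    rw [Finset.smul_sum]
    exact Finset.sum_congr rfl fun j _ => by
      simp [Pi.smul_apply, TensorProduct.smul_tmul', smul_eq_mul]
  rw [this, QuadraticMap.map_smul, smul_eq_mul, sq]

omit [Invertible (2 : K)] in
lemma exists_rep {F : Type*} [CommRing F] [Algebra K F] (x : F ⊗[K] (Fin n → K)) :
    ∃ c : Fin n → F, x = ∑ j, c j ⊗ₜ[K] Pi.basisFun K (Fin n) j := by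
  induction x using TensorProduct.induction_on with
  | zero => exact ⟨0, by simp⟩
  | tmul a v =>
    refine ⟨fun j => v j • a, ?_⟩
    have hv : v = ∑ j, v j • Pi.basisFun K (Fin n) j := by
      simp [Pi.basisFun_apply]
      ext i; simp [Finset.sum_apply, Pi.single_apply]
    conv_lhs => rw [hv]
    rw [TensorProduct.tmul_sum]
    exact Finset.sum_congr rfl fun j _ => by rw [TensorProduct.tmul_smul, TensorProduct.smul_tmul']
  | add x y hx hy =>
    obtain ⟨c, rfl⟩ := hx
    obtain ⟨d, rfl⟩ := hy
    exact ⟨c + d, by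
      rw [← Finset.sum_add_distrib]
      exact Finset.sum_congr rfl fun j _ => by
        rw [Pi.add_apply, TensorProduct.add_tmul]⟩

/-- coordinate extraction -/
def coordF (F : Type*) [CommRing F] [Algebra K F] (j : Fin n) :
    F ⊗[K] (Fin n → K) →ₗ[K] F :=
  (TensorProduct.rid K F).toLinearMap ∘ₗ
    LinearMap.lTensor F ((Pi.basisFun K (Fin n)).coord j)

omit [Invertible (2 : K)] in
lemma coordF_apply {F : Type*} [CommRing F] [Algebra K F] (j : Fin n) (c : Fin n → F) :
    coordF F j (∑ i, c i ⊗ₜ[K] Pi.basisFun K (Fin n) i) = c j := by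
  rw [map_sum]
  have h : ∀ i, coordF F j (c i ⊗ₜ[K] Pi.basisFun K (Fin n) i)
      = if i = j then c i else 0 := by
    intro i
    simp only [coordF, LinearMap.coe_comp, LinearEquiv.coe_coe, Function.comp_apply,
      LinearMap.lTensor_tmul, Module.Basis.coord_apply, Module.Basis.repr_self, TensorProduct.rid_tmul,
      Finsupp.single_apply]
    by_cases hij : i = j <;> simp [hij]
  simp only [h]
  simp

end Phi

section Grp

variable {F W : Type*} [Field F] [AddCommGroup W] [Module F W]

lemma inv_mem_Dunits (Q : QuadraticForm F W) {u : Fˣ} (hu : u ∈ Dunits Q) :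
    u⁻¹ ∈ Dunits Q := by
  obtain ⟨v, hv⟩ := hu
  refine ⟨((u⁻¹ : Fˣ) : F) • v, ?_⟩
  rw [QuadraticMap.map_smul, hv, smul_eq_mul]
  rw [← Units.val_mul, ← Units.val_mul]
  congr 1
  group

lemma exists_list_of_mem_Tgrp (Q : QuadraticForm F W) {u : Fˣ} (hu : u ∈ Tgrp Q) :
    ∃ l : List Fˣ, (∀ x ∈ l, x ∈ Dunits Q) ∧ l.prod = u := by
  have hset : Dunits Q ∪ (Dunits Q)⁻¹ = Dunits Q := by
    apply Set.union_eq_self_of_subset_right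
    intro x hx
    rw [Set.mem_inv] at hx
    simpa using inv_mem_Dunits Q hx
  have : u ∈ Submonoid.closure (Dunits Q) := by
    have h2 : u ∈ (Subgroup.closure (Dunits Q)).toSubmonoid := hu
    rw [Subgroup.closure_toSubmonoid, hset] at h2
    exact h2
  exact Submonoid.exists_list_of_mem_closure this

end Grp

lemma odd_sum_list : ∀ L : List ℕ, Odd L.sum → ∃ x ∈ L, Odd x := by
  intro L
  induction L with
  | nil => intro h; simp at h
  | cons a t ih =>
    intro h
    rw [List.sum_cons] at h
    rcases Nat.even_or_odd a with he | ho
    · obtain ⟨x, hx, hox⟩ := ih (by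
        rcases Nat.even_or_odd t.sum with he2 | ho2
        · exact absurd (Even.add he he2) (Nat.not_even_iff_odd.mpr h)
        · exact ho2)
      exact ⟨x, List.mem_cons_of_mem _ hx, hox⟩
    · exact ⟨a, List.mem_cons_self, ho⟩

lemma mult_list_prod {R : Type*} [CommRing R] [IsDomain R] [WfDvdMonoid R] {f : R}
    (hp : Prime f) : ∀ L : List R, (∀ x ∈ L, x ≠ 0) →
    multiplicity f L.prod = (L.map (multiplicity f)).sum := by
  intro L
  induction L with
  | nil =>
    intro _
    simp [multiplicity_of_one_right hp.not_isUnit]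
  | cons a t ih =>
    intro hL
    have ha : a ≠ 0 := hL a (List.mem_cons_self)
    have ht : ∀ x ∈ t, x ≠ 0 := fun x hx => hL x (List.mem_cons_of_mem _ hx)
    have htp : t.prod ≠ 0 := by
      rw [Ne, List.prod_eq_zero_iff]
      intro h0; exact ht 0 h0 rfl
    rw [List.prod_cons, multiplicity_mul hp
      (FiniteMultiplicity.of_not_isUnit hp.not_isUnit (mul_ne_zero ha htp)),
      List.map_cons, List.sum_cons, ih ht]

end Stmt5Aux

open Stmt5Aux in
/-- if `a·f ∈ T_{K(X)}(φ)` for some `a ∈ K*`, then `φ` is isotropic over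
`K(f) = Frac(K[X₁,…,Xₘ]/(f))`. -/
theorem stmt_5 {K : Type*} [Field K] [Invertible (2 : K)] {n m : ℕ}
    (φ : QuadraticForm K (Fin n → K))
    (hndφ : (QuadraticMap.associated (R := K) φ).Nondegenerate)
    (f : MvPolynomial (Fin m) K) (hf : Irreducible f) (a : K) (ha : a ≠ 0)
    (h : ∃ u : (FractionRing (MvPolynomial (Fin m) K))ˣ,
      (u : FractionRing (MvPolynomial (Fin m) K)) =
        algebraMap (MvPolynomial (Fin m) K) (FractionRing (MvPolynomial (Fin m) K))
          (MvPolynomial.C a * f) ∧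
      u ∈ Tgrp (φ.baseChange (FractionRing (MvPolynomial (Fin m) K)))) :
    IsotropicOver φ (FractionRing (MvPolynomial (Fin m) K ⧸ Ideal.span {f})) := by
  classical
  have hprime : Prime f := UniqueFactorizationMonoid.irreducible_iff_prime.mp hf
  obtain ⟨u, hu, huT⟩ := h
  -- the descent lemma
  have descent : ∀ N : ℕ, ∀ w : Fin n → (Rm K m), Phi φ (Rm K m) w ≠ 0 →
      multiplicity f (Phi φ (Rm K m) w) = N → Odd N →
      IsotropicOver φ (FractionRing ((Rm K m) ⧸ Ideal.span {f})) := by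
    intro N
    induction N using Nat.strong_induction_on with
    | _ N IH =>
      intro w hw0 hmul hodd
      by_cases hdvd : ∀ j, f ∣ w j
      · -- divide out f
        choose w' hw' using hdvd
        have hww : w = f • w' := by funext j; rw [Pi.smul_apply, smul_eq_mul]; exact hw' j
        have hPhi : Phi φ (Rm K m) w = f ^ 2 * Phi φ (Rm K m) w' := by rw [hww, Phi_smul]
        have hw'0 : Phi φ (Rm K m) w' ≠ 0 := by
          intro h0; rw [hPhi, h0, mul_zero] at hw0; exact hw0 rfl
        have hfin : FiniteMultiplicity f (f ^ 2 * Phi φ (Rm K m) w') :=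
          FiniteMultiplicity.of_not_isUnit hprime.not_isUnit (by rw [← hPhi]; exact hw0)
        have hmul2 : multiplicity f (Phi φ (Rm K m) w) = 2 + multiplicity f (Phi φ (Rm K m) w') := by
          rw [hPhi, multiplicity_mul hprime hfin, multiplicity_pow_self_of_prime hprime]
        set N' := multiplicity f (Phi φ (Rm K m) w') with hN'
        have hNN : N = 2 + N' := by rw [← hmul, hmul2]
        have hoddN' : Odd N' := by
          rcases hodd with ⟨k, hk⟩
          refine ⟨k - 1, ?_⟩
          omega
        exact IH N' (by omega) w' hw'0 rfl hoddN'
      · push_neg at hdvd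
        obtain ⟨j0, hj0⟩ := hdvd
        -- f divides Phi φ (Rm K m) w since multiplicity is odd (hence positive)
        have hpos : 0 < multiplicity f (Phi φ (Rm K m) w) := by
          rw [hmul]; rcases hodd with ⟨k, hk⟩; omega
        have hfd : f ∣ Phi φ (Rm K m) w := dvd_of_multiplicity_pos hpos
        haveI : (Ideal.span {f}).IsPrime := (Ideal.span_singleton_prime hprime.ne_zero).mpr hprime
        set Rf := (Rm K m) ⧸ Ideal.span {f} with hRf
        set Kf := FractionRing Rf with hKf
        set ψ : (Rm K m) →ₐ[K] Kf :=
          (IsScalarTower.toAlgHom K Rf Kf).comp (Ideal.Quotient.mkₐ K (Ideal.span {f})) with hψ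
        refine ⟨∑ j, ψ (w j) ⊗ₜ[K] Pi.basisFun K (Fin n) j, ?_, ?_⟩
        · intro h0
          have hc := coordF_apply (K := K) (F := Kf) j0 (fun j => ψ (w j))
          rw [h0, map_zero] at hc
          -- so ψ (w j0) = 0
          have hmk : Ideal.Quotient.mk (Ideal.span {f}) (w j0) ≠ 0 := by
            rw [Ne, Ideal.Quotient.eq_zero_iff_mem, Ideal.mem_span_singleton]
            exact hj0
          have hinj : Function.Injective (algebraMap Rf Kf) := IsFractionRing.injective _ _
          apply hmk
          apply hinj
          rw [map_zero]
          exact hc.symm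
        · have := Phi_natural φ ψ w
          rw [Phi] at this
          rw [this]
          obtain ⟨t, ht⟩ := hfd
          rw [ht, map_mul]
          have hz : ψ f = 0 := by
            have h1 : ψ f = algebraMap Rf Kf (Ideal.Quotient.mk (Ideal.span {f}) f) := rfl
            rw [h1, Ideal.Quotient.eq_zero_iff_mem.mpr (Ideal.mem_span_singleton_self f),
              map_zero]
          rw [hz, zero_mul]
  -- get the list of represented values
  obtain ⟨l, hl, hlprod⟩ := exists_list_of_mem_Tgrp _ huT
  -- clear denominators along the list
  have main : ∀ l' : List (Fm K m)ˣ, (∀ x ∈ l', x ∈ Dunits (φ.baseChange (Fm K m))) →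
      ∃ (g : (Rm K m)) (L : List (Rm K m)), g ≠ 0 ∧
        (∀ p ∈ L, p ≠ 0 ∧ ∃ w : Fin n → (Rm K m), Phi φ (Rm K m) w = p) ∧
        algebraMap (Rm K m) (Fm K m) (g ^ 2) * ((l'.prod : (Fm K m)ˣ) : (Fm K m)) = algebraMap (Rm K m) (Fm K m) L.prod := by
    intro l'
    induction l' with
    | nil => exact fun _ => ⟨1, [], one_ne_zero, by simp, by simp⟩
    | cons x t ih =>
      intro hxt
      obtain ⟨g, L, hg, hL, heq⟩ := ih fun y hy => hxt y (List.mem_cons_of_mem _ hy)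
      obtain ⟨v, hv⟩ := hxt x (List.mem_cons_self)
      obtain ⟨c, rfl⟩ := exists_rep v
      -- clear denominators of c
      obtain ⟨b, hb⟩ := IsLocalization.exist_integer_multiples (nonZeroDivisors (Rm K m))
        Finset.univ c
      have hbne : (b : (Rm K m)) ≠ 0 := nonZeroDivisors.ne_zero b.2
      choose wfun hwfun using fun j => hb j (Finset.mem_univ j)
      have hx : Phi φ (Fm K m) c = (x : (Fm K m)) := hv
      have hkey : algebraMap (Rm K m) (Fm K m) ((b : (Rm K m)) ^ 2) * (x : (Fm K m)) = algebraMap (Rm K m) (Fm K m) (Phi φ (Rm K m) wfun) := by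
        have h1 : Phi φ (Fm K m) (fun j => algebraMap (Rm K m) (Fm K m) (wfun j)) = algebraMap (Rm K m) (Fm K m) (Phi φ (Rm K m) wfun) :=
          Phi_natural φ (IsScalarTower.toAlgHom K (Rm K m) (Fm K m)) wfun
        have h2 : (fun j => algebraMap (Rm K m) (Fm K m) (wfun j)) = (algebraMap (Rm K m) (Fm K m) (b : (Rm K m))) • c := by
          funext j
          rw [hwfun j, Pi.smul_apply, Algebra.smul_def, smul_eq_mul]
        rw [← h1, h2, Phi_smul, hx, map_pow]
      have hPw : Phi φ (Rm K m) wfun ≠ 0 := by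
        intro h0
        rw [h0, map_zero] at hkey
        have hb2 : algebraMap (Rm K m) (Fm K m) ((b : (Rm K m)) ^ 2) ≠ 0 := by
          rw [Ne, map_eq_zero_iff _ (IsFractionRing.injective (Rm K m) (Fm K m))]
          exact pow_ne_zero 2 hbne
        exact (mul_ne_zero hb2 x.ne_zero) hkey
      refine ⟨(b : (Rm K m)) * g, Phi φ (Rm K m) wfun :: L, mul_ne_zero hbne hg, ?_, ?_⟩
      · intro p hp
        rcases List.mem_cons.mp hp with h | h
        · subst h; exact ⟨hPw, wfun, rfl⟩
        · exact hL p h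
      · rw [List.prod_cons, List.prod_cons, Units.val_mul, map_mul, mul_pow, map_mul]
        calc algebraMap (Rm K m) (Fm K m) ((b:(Rm K m))^2) * algebraMap (Rm K m) (Fm K m) (g^2) * ((x:(Fm K m)) * ((t.prod : (Fm K m)ˣ):(Fm K m)))
            = (algebraMap (Rm K m) (Fm K m) ((b:(Rm K m))^2) * (x:(Fm K m))) * (algebraMap (Rm K m) (Fm K m) (g^2) * ((t.prod : (Fm K m)ˣ):(Fm K m))) := by
              ring
          _ = algebraMap (Rm K m) (Fm K m) (Phi φ (Rm K m) wfun) * algebraMap (Rm K m) (Fm K m) L.prod := by rw [hkey, heq]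
  obtain ⟨g, L, hg, hL, heq⟩ := main l hl
  rw [hlprod, hu] at heq
  rw [← map_mul] at heq
  have heqR : g ^ 2 * (MvPolynomial.C a * f) = L.prod :=
    IsFractionRing.injective (Rm K m) (Fm K m) heq
  -- multiplicity bookkeeping
  have hCa : IsUnit (MvPolynomial.C (σ := Fin m) a) := by
    simpa using ha.isUnit.map (MvPolynomial.C : K →+* (Rm K m))
  have hCane : (MvPolynomial.C (σ := Fin m) a) ≠ 0 := fun h0 => by
    simp [h0] at hCa
  have hlhs_ne : g ^ 2 * (MvPolynomial.C a * f) ≠ 0 :=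
    mul_ne_zero (pow_ne_zero 2 hg) (mul_ne_zero hCane hprime.ne_zero)
  have hLne : ∀ p ∈ L, p ≠ 0 := fun p hp => (hL p hp).1
  have hmullhs : multiplicity f (g ^ 2 * (MvPolynomial.C a * f)) = 2 * multiplicity f g + 1 := by
    rw [multiplicity_mul hprime (FiniteMultiplicity.of_not_isUnit hprime.not_isUnit hlhs_ne),
      multiplicity_mul hprime (FiniteMultiplicity.of_not_isUnit hprime.not_isUnit
        (mul_ne_zero hCane hprime.ne_zero)),
      (FiniteMultiplicity.of_not_isUnit hprime.not_isUnit hg).multiplicity_pow hprime,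
      multiplicity_eq_zero.mpr (fun hd => hprime.not_isUnit (isUnit_of_dvd_unit hd hCa)),
      multiplicity_self]
  have hoddsum : Odd ((L.map (multiplicity f)).sum) := by
    rw [← mult_list_prod hprime L hLne, ← heqR, hmullhs]
    exact ⟨multiplicity f g, by ring⟩
  obtain ⟨x, hxmem, hxodd⟩ := odd_sum_list _ hoddsum
  obtain ⟨p, hpL, rfl⟩ := List.mem_map.mp hxmem
  obtain ⟨hp0, w, hw⟩ := hL p hpL
  exact descent (multiplicity f p) w (hw ▸ hp0) (by rw [hw]) hxodd

end
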